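/- Let d ≥ 4 and let G be a finite d-regular simple graph. If G has at least 2d³ + 2d − 2d² vertices, then the b-chromatic number of G equals d + 1, i.e., G admits a proper vertex coloring with d + 1 colors in which every one of the d + 1 color classes contains a vertex adjacent to at least one vertex of each of the other d color classes. -/

import Mathlib

open Finset
set_option linter.unusedSectionVars false
set_option maxHeartbeats 1000000

section SDR
variable {α : Type*} [DecidableEq α]

theorem sdr_one : ∀ (n : ℕ) (s : Finset α) (C : Finset ℕ) (F : α → Finset ℕ),
    s.card = n → C.card = n → (∑ u ∈ s, (F u ∩ C).card) ≤ n - 1 →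
    ∃ g : α → ℕ, (∀ u ∈ s, ∀ u' ∈ s, g u = g u' → u = u') ∧ ∀ u ∈ s, g u ∈ C ∧ g u ∉ F u := by
  intro n
  induction n with
  | zero =>
      intro s C F hs _ _
      have : s = ∅ := Finset.card_eq_zero.mp hs
      subst this
      exact ⟨fun _ => 0, by simp, by simp⟩
  | succ m ih =>
      intro s C F hs hC hsum
      have hne : s.Nonempty := by rw [← Finset.card_pos, hs]; omega
      obtain ⟨u0, hu0, hmax⟩ := s.exists_max_image (fun u => (F u ∩ C).card) hne
      have hsum' : (∑ u ∈ s, (F u ∩ C).card) ≤ m := by omega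
      have hterm : (F u0 ∩ C).card ≤ m :=
        le_trans (Finset.single_le_sum (f := fun u => (F u ∩ C).card) (fun _ _ => Nat.zero_le _) hu0) hsum'
      have hcd : (C \ F u0).Nonempty := by
        rw [Finset.sdiff_nonempty]
        intro hsub
        have h1 : F u0 ∩ C = C := by rw [Finset.inter_eq_right]; exact hsub
        rw [h1, hC] at hterm; omega
      obtain ⟨c, hc⟩ := hcd
      rw [Finset.mem_sdiff] at hc
      have hs' : (s.erase u0).card = m := by rw [Finset.card_erase_of_mem hu0, hs]; omega
      have hC' : (C.erase c).card = m := by rw [Finset.card_erase_of_mem hc.1, hC]; omega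
      have hdecomp : (F u0 ∩ C).card + (∑ u ∈ s.erase u0, (F u ∩ C).card)
          = ∑ u ∈ s, (F u ∩ C).card := Finset.add_sum_erase _ (fun u => (F u ∩ C).card) hu0
      have hmono : (∑ u ∈ s.erase u0, (F u ∩ (C.erase c)).card)
          ≤ ∑ u ∈ s.erase u0, (F u ∩ C).card := by
        refine Finset.sum_le_sum fun u _ => Finset.card_le_card ?_
        exact Finset.inter_subset_inter_left (Finset.erase_subset _ _)
      have hsum'' : (∑ u ∈ s.erase u0, (F u ∩ (C.erase c)).card) ≤ m - 1 := by
        rcases Nat.eq_zero_or_pos (F u0 ∩ C).card with h0 | h0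
        · have : ∀ u ∈ s.erase u0, (F u ∩ (C.erase c)).card = 0 := by
            intro u hu
            have := hmax u (Finset.mem_of_mem_erase hu)
            have h2 : (F u ∩ (C.erase c)).card ≤ (F u ∩ C).card :=
              Finset.card_le_card (Finset.inter_subset_inter_left (Finset.erase_subset _ _))
            omega
          rw [Finset.sum_eq_zero this]; omega
        · omega
      obtain ⟨g, hginj, hgmem⟩ := ih (s.erase u0) (C.erase c) F hs' hC' hsum''
      refine ⟨Function.update g u0 c, ?_, ?_⟩
      · intro u hu u' hu' heq
        by_cases h1 : u = u0 <;> by_cases h2 : u' = u0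
        · rw [h1, h2]
        · exfalso
          rw [h1] at heq; rw [Function.update_self, Function.update_of_ne h2] at heq
          have := (hgmem u' (Finset.mem_erase.mpr ⟨h2, hu'⟩)).1
          rw [← heq] at this
          exact (Finset.notMem_erase c C) this
        · exfalso
          rw [h2] at heq; rw [Function.update_self, Function.update_of_ne h1] at heq
          have := (hgmem u (Finset.mem_erase.mpr ⟨h1, hu⟩)).1
          rw [heq] at this
          exact (Finset.notMem_erase c C) this
        · rw [Function.update_of_ne h1, Function.update_of_ne h2] at heq
          exact hginj u (Finset.mem_erase.mpr ⟨h1, hu⟩) u' (Finset.mem_erase.mpr ⟨h2, hu'⟩) heq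
      · intro u hu
        by_cases h1 : u = u0
        · rw [h1, Function.update_self]; exact ⟨hc.1, hc.2⟩
        · rw [Function.update_of_ne h1]
          obtain ⟨hmem, hnot⟩ := hgmem u (Finset.mem_erase.mpr ⟨h1, hu⟩)
          exact ⟨Finset.mem_of_mem_erase hmem, hnot⟩

theorem sdr_two (s : Finset α) (C : Finset ℕ) (F : α → Finset ℕ)
    (hsC : s.card = C.card)
    (hsum : (∑ u ∈ s, (F u ∩ C).card) ≤ s.card)
    (hmax : ∀ u ∈ s, (F u ∩ C).card < s.card)
    (hcom : ¬ ∃ c ∈ C, ∀ u ∈ s, c ∈ F u) :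
    ∃ g : α → ℕ, (∀ u ∈ s, ∀ u' ∈ s, g u = g u' → u = u') ∧ ∀ u ∈ s, g u ∈ C ∧ g u ∉ F u := by
  rcases Nat.eq_zero_or_pos s.card with h0 | hpos
  · have : s = ∅ := Finset.card_eq_zero.mp h0
    subst this
    exact ⟨fun _ => 0, by simp, by simp⟩
  by_cases hA : ∃ u0 ∈ s, 2 ≤ (F u0 ∩ C).card
  · obtain ⟨u0, hu0, h2⟩ := hA
    have hcd : (C \ F u0).Nonempty := by
      rw [Finset.sdiff_nonempty]
      intro hsub
      have h1 : F u0 ∩ C = C := by rw [Finset.inter_eq_right]; exact hsub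
      have := hmax u0 hu0
      rw [h1, ← hsC] at this; omega
    obtain ⟨c, hc⟩ := hcd
    rw [Finset.mem_sdiff] at hc
    have hdecomp : (F u0 ∩ C).card + (∑ u ∈ s.erase u0, (F u ∩ C).card)
        = ∑ u ∈ s, (F u ∩ C).card := Finset.add_sum_erase _ (fun u => (F u ∩ C).card) hu0
    have hmono : (∑ u ∈ s.erase u0, (F u ∩ (C.erase c)).card)
        ≤ ∑ u ∈ s.erase u0, (F u ∩ C).card :=
      Finset.sum_le_sum fun u _ => Finset.card_le_card
        (Finset.inter_subset_inter_left (Finset.erase_subset _ _))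
    have hs' : (s.erase u0).card = s.card - 1 := Finset.card_erase_of_mem hu0
    have hC' : (C.erase c).card = s.card - 1 := by
      rw [Finset.card_erase_of_mem hc.1, hsC]
    obtain ⟨g, hginj, hgmem⟩ := sdr_one (s.card - 1) (s.erase u0) (C.erase c) F hs' hC'
      (by omega)
    refine ⟨Function.update g u0 c, ?_, ?_⟩
    · intro u hu u' hu' heq
      by_cases h1 : u = u0 <;> by_cases h2' : u' = u0
      · rw [h1, h2']
      · exfalso
        rw [h1] at heq; rw [Function.update_self, Function.update_of_ne h2'] at heq
        have := (hgmem u' (Finset.mem_erase.mpr ⟨h2', hu'⟩)).1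
        rw [← heq] at this
        exact (Finset.notMem_erase c C) this
      · exfalso
        rw [h2'] at heq; rw [Function.update_self, Function.update_of_ne h1] at heq
        have := (hgmem u (Finset.mem_erase.mpr ⟨h1, hu⟩)).1
        rw [heq] at this
        exact (Finset.notMem_erase c C) this
      · rw [Function.update_of_ne h1, Function.update_of_ne h2'] at heq
        exact hginj u (Finset.mem_erase.mpr ⟨h1, hu⟩) u' (Finset.mem_erase.mpr ⟨h2', hu'⟩) heq
    · intro u hu
      by_cases h1 : u = u0
      · rw [h1, Function.update_self]; exact hc
      · rw [Function.update_of_ne h1]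
        obtain ⟨hmem, hnot⟩ := hgmem u (Finset.mem_erase.mpr ⟨h1, hu⟩)
        exact ⟨Finset.mem_of_mem_erase hmem, hnot⟩
  · push_neg at hA
    by_cases hB : (∑ u ∈ s, (F u ∩ C).card) ≤ s.card - 1
    · exact sdr_one s.card s C F rfl hsC.symm hB
    · push_neg at hB
      have hall1 : ∀ u ∈ s, (F u ∩ C).card = 1 := by
        intro u hu
        have h1 := hA u hu
        rcases Nat.lt_or_ge (F u ∩ C).card 1 with h | h
        · exfalso
          have h0' : (F u ∩ C).card = 0 := by omega
          have hdec : (F u ∩ C).card + (∑ x ∈ s.erase u, (F x ∩ C).card)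
              = ∑ x ∈ s, (F x ∩ C).card := Finset.add_sum_erase _ (fun x => (F x ∩ C).card) hu
          have hb : (∑ x ∈ s.erase u, (F x ∩ C).card) ≤ (s.erase u).card * 1 := by
            refine Finset.sum_le_card_nsmul _ _ 1 ?_
            intro x hx; have := hA x (Finset.mem_of_mem_erase hx); omega
          rw [Finset.card_erase_of_mem hu] at hb
          omega
        · omega
      -- each u has a unique forbidden color cu
      have huniq : ∀ u ∈ s, ∃ cu, F u ∩ C = {cu} := by
        intro u hu; exact Finset.card_eq_one.mp (hall1 u hu)
      choose! cu hcu using huniq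
      have hcumem : ∀ u ∈ s, cu u ∈ F u ∩ C := by
        intro u hu; rw [hcu u hu]; exact Finset.mem_singleton_self _
      -- not all cu equal
      have hne : ∃ u1 ∈ s, ∃ u2 ∈ s, cu u1 ≠ cu u2 := by
        by_contra hall
        push_neg at hall
        obtain ⟨u0, hu0⟩ := Finset.card_pos.mp hpos
        apply hcom
        refine ⟨cu u0, (Finset.mem_inter.mp (hcumem u0 hu0)).2, ?_⟩
        intro u hu
        have := hall u0 hu0 u hu
        rw [this]
        exact (Finset.mem_inter.mp (hcumem u hu)).1
      obtain ⟨u1, hu1, u2, hu2, hcc⟩ := hne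
      have hu12 : u1 ≠ u2 := fun h => hcc (by rw [h])
      set c2 := cu u2 with hc2
      have hc2C : c2 ∈ C := (Finset.mem_inter.mp (hcumem u2 hu2)).2
      have hc2notF : c2 ∉ F u1 := by
        intro h
        have : c2 ∈ F u1 ∩ C := Finset.mem_inter.mpr ⟨h, hc2C⟩
        rw [hcu u1 hu1] at this
        exact hcc (Finset.mem_singleton.mp this).symm
      have hs' : (s.erase u1).card = s.card - 1 := Finset.card_erase_of_mem hu1
      have hC' : (C.erase c2).card = s.card - 1 := by
        rw [Finset.card_erase_of_mem hc2C, hsC]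
      have hsum' : (∑ u ∈ s.erase u1, (F u ∩ (C.erase c2)).card) ≤ s.card - 1 - 1 := by
        have hu2' : u2 ∈ s.erase u1 := Finset.mem_erase.mpr ⟨fun h => hu12 h.symm, hu2⟩
        have hdec : (F u2 ∩ (C.erase c2)).card + (∑ x ∈ (s.erase u1).erase u2, (F x ∩ (C.erase c2)).card)
            = ∑ x ∈ s.erase u1, (F x ∩ (C.erase c2)).card :=
          Finset.add_sum_erase _ (fun x => (F x ∩ (C.erase c2)).card) hu2'
        have h20 : (F u2 ∩ (C.erase c2)).card = 0 := by
          rw [Finset.card_eq_zero]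
          ext x
          simp only [Finset.mem_inter, Finset.mem_erase, Finset.notMem_empty, iff_false]
          rintro ⟨hxF, hxne, hxC⟩
          have : x ∈ F u2 ∩ C := Finset.mem_inter.mpr ⟨hxF, hxC⟩
          rw [hcu u2 hu2] at this
          exact hxne (Finset.mem_singleton.mp this)
        have hb : (∑ x ∈ (s.erase u1).erase u2, (F x ∩ (C.erase c2)).card)
            ≤ ((s.erase u1).erase u2).card * 1 := by
          refine Finset.sum_le_card_nsmul _ _ 1 ?_
          intro x hx
          have hxs : x ∈ s := Finset.mem_of_mem_erase (Finset.mem_of_mem_erase hx)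
          have h1 : (F x ∩ (C.erase c2)).card ≤ (F x ∩ C).card :=
                Finset.card_le_card (Finset.inter_subset_inter_left (Finset.erase_subset _ _))
          have h2 := hA x hxs
          omega
        rw [Finset.card_erase_of_mem hu2', hs'] at hb
        omega
      obtain ⟨g, hginj, hgmem⟩ := sdr_one (s.card - 1) (s.erase u1) (C.erase c2) F hs' hC' hsum'
      refine ⟨Function.update g u1 c2, ?_, ?_⟩
      · intro u hu u' hu' heq
        by_cases h1 : u = u1 <;> by_cases h2' : u' = u1
        · rw [h1, h2']
        · exfalso
          rw [h1] at heq; rw [Function.update_self, Function.update_of_ne h2'] at heq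
          have := (hgmem u' (Finset.mem_erase.mpr ⟨h2', hu'⟩)).1
          rw [← heq] at this
          exact (Finset.notMem_erase c2 C) this
        · exfalso
          rw [h2'] at heq; rw [Function.update_self, Function.update_of_ne h1] at heq
          have := (hgmem u (Finset.mem_erase.mpr ⟨h1, hu⟩)).1
          rw [heq] at this
          exact (Finset.notMem_erase c2 C) this
        · rw [Function.update_of_ne h1, Function.update_of_ne h2'] at heq
          exact hginj u (Finset.mem_erase.mpr ⟨h1, hu⟩) u' (Finset.mem_erase.mpr ⟨h2', hu'⟩) heq
      · intro u hu
        by_cases h1 : u = u1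
        · rw [h1, Function.update_self]; exact ⟨hc2C, hc2notF⟩
        · rw [Function.update_of_ne h1]
          obtain ⟨hmem, hnot⟩ := hgmem u (Finset.mem_erase.mpr ⟨h1, hu⟩)
          exact ⟨Finset.mem_of_mem_erase hmem, hnot⟩


end SDR


/-- A b-coloring of `G` with `k` colors: a proper coloring `c : V → Fin k` such that
every color class contains a vertex adjacent to at least one vertex of each other color class. -/
def IsBColoring {V : Type*} (G : SimpleGraph V) (k : ℕ) (c : V → Fin k) : Prop :=
  (∀ u v : V, G.Adj u v → c u ≠ c v) ∧
  ∀ i : Fin k, ∃ v : V, c v = i ∧ ∀ j : Fin k, j ≠ i → ∃ w : V, G.Adj v w ∧ c w = j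

/-- The b-chromatic number of `G`: the largest `k` such that `G` admits a b-coloring
with `k` colors. -/
noncomputable def bChromaticNumber {V : Type*} (G : SimpleGraph V) : ℕ :=
  sSup {k : ℕ | ∃ c : V → Fin k, IsBColoring G k c}


section Main
variable {V : Type*} [Fintype V] [DecidableEq V] (G : SimpleGraph V) [DecidableRel G.Adj]

/-- `x` and `y` are at distance at least 3. -/
def Sep3 (x y : V) : Prop := x ≠ y ∧ ¬ G.Adj x y ∧ ∀ w : V, ¬(G.Adj x w ∧ G.Adj w y)

instance (x y : V) : Decidable (Sep3 G x y) := by unfold Sep3; infer_instance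

lemma sep3_symm {x y : V} (h : Sep3 G x y) : Sep3 G y x :=
  ⟨h.1.symm, fun a => h.2.1 a.symm, fun w hw => h.2.2 w ⟨hw.2.symm, hw.1.symm⟩⟩

/-- ball of radius 2 around w -/
def ball2 (w : V) : Finset V :=
  insert w ((G.neighborFinset w) ∪ (G.neighborFinset w).biUnion (fun u => (G.neighborFinset u).erase w))

variable (d : ℕ) (f : ℕ → V) (col : V → Option ℕ) (i : ℕ)

def PartsSet : Finset V := (Finset.range i).biUnion (fun j => G.neighborFinset (f j))

def CandSet : Finset V := univ.filter (fun v => ∀ j < i, Sep3 G v (f j))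

def crossN (v : V) : ℕ := ∑ u ∈ G.neighborFinset v, (G.neighborFinset u ∩ PartsSet G f i).card

def Fco (u : V) : Finset ℕ := (G.neighborFinset u).biUnion (fun w => (col w).toFinset)

def Cset : Finset ℕ := (Finset.range (d+1)).erase i

structure BInv : Prop where
  sep : ∀ j < i, ∀ k < i, j ≠ k → Sep3 G (f j) (f k)
  dom : ∀ v, (col v).isSome ↔ ∃ j < i, v = f j ∨ G.Adj (f j) v
  center : ∀ j < i, col (f j) = some j
  proper : ∀ u v, G.Adj u v → (col u).isSome → col u ≠ col v
  rainbow : ∀ j < i, ∀ c < d+1, c ≠ j → ∃ u, G.Adj (f j) u ∧ col u = some c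
  inj : ∀ j < i, ∀ u ∈ G.neighborFinset (f j), ∀ u' ∈ G.neighborFinset (f j), col u = col u' → u = u'
  lt : ∀ v c, col v = some c → c < d + 1

variable {G d f col i}

lemma mem_candSet {v : V} : v ∈ CandSet G f i ↔ ∀ j < i, Sep3 G v (f j) := by
  simp [CandSet]

lemma mem_Fco {u : V} {c : ℕ} : c ∈ Fco G col u ↔ ∃ w, G.Adj u w ∧ col w = some c := by
  simp [Fco, Option.mem_toFinset, SimpleGraph.mem_neighborFinset, Option.mem_def]

lemma NBcard (hreg : G.IsRegularOfDegree d) (v : V) : (G.neighborFinset v).card = d := by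
  rw [SimpleGraph.card_neighborFinset_eq_degree]; exact hreg v

lemma card_ball2 (hreg : G.IsRegularOfDegree d) (w : V) : (ball2 G w).card ≤ d*d + 1 := by
  have h1 : (ball2 G w).card ≤ 1 + ((G.neighborFinset w).card +
      ((G.neighborFinset w).biUnion (fun u => (G.neighborFinset u).erase w)).card) := by
    refine le_trans (Finset.card_insert_le _ _) ?_
    have := Finset.card_union_le (G.neighborFinset w)
      ((G.neighborFinset w).biUnion (fun u => (G.neighborFinset u).erase w))
    omega
  have h2 : ((G.neighborFinset w).biUnion (fun u => (G.neighborFinset u).erase w)).card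
      ≤ ∑ u ∈ G.neighborFinset w, ((G.neighborFinset u).erase w).card :=
    Finset.card_biUnion_le
  have h3 : ∀ u ∈ G.neighborFinset w, ((G.neighborFinset u).erase w).card = d - 1 := by
    intro u hu
    rw [Finset.card_erase_of_mem, NBcard hreg u]
    rw [SimpleGraph.mem_neighborFinset] at hu ⊢
    exact hu.symm
  rw [Finset.sum_congr rfl h3, Finset.sum_const, NBcard hreg w] at h2
  simp only [smul_eq_mul] at h2
  have h4 : d * (d-1) + d = d * d := by cases d with
    | zero => rfl
    | succ n => simp [Nat.succ_sub_one]; ring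
  have h5 := NBcard hreg w
  omega

lemma mem_ball2_of_not_sep3 {v w : V} (h : ¬ Sep3 G v w) : v ∈ ball2 G w := by
  unfold Sep3 at h
  push_neg at h
  by_cases h1 : v = w
  · simp [ball2, h1]
  by_cases h2 : G.Adj v w
  · simp only [ball2, Finset.mem_insert, Finset.mem_union]
    right; left
    rw [SimpleGraph.mem_neighborFinset]; exact h2.symm
  obtain ⟨u, hu1, hu2⟩ := h h1 h2
  simp only [ball2, Finset.mem_insert, Finset.mem_union]
  right; right
  refine Finset.mem_biUnion.mpr ⟨u, ?_, ?_⟩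
  · rw [SimpleGraph.mem_neighborFinset]; exact hu2.symm
  · rw [Finset.mem_erase, SimpleGraph.mem_neighborFinset]
    exact ⟨h1, hu1.symm⟩

lemma cand_card_lb : Fintype.card V ≤ (CandSet G f i).card + ∑ j ∈ Finset.range i, (ball2 G (f j)).card := by
  classical
  have hsplit : (CandSet G f i).card + (univ.filter (fun v => ¬ ∀ j < i, Sep3 G v (f j))).card
      = Fintype.card V := by
    rw [← Finset.card_univ]
    exact Finset.card_filter_add_card_filter_not _
  have hsub : (univ.filter (fun v => ¬ ∀ j < i, Sep3 G v (f j)))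
      ⊆ (Finset.range i).biUnion (fun j => ball2 G (f j)) := by
    intro v hv
    rw [Finset.mem_filter] at hv
    push_neg at hv
    obtain ⟨j, hj, hns⟩ := hv.2
    exact Finset.mem_biUnion.mpr ⟨j, Finset.mem_range.mpr hj, mem_ball2_of_not_sep3 hns⟩
  have := le_trans (Finset.card_le_card hsub) (Finset.card_biUnion_le)
  omega

lemma cand_col_none (inv : BInv G d f col i) {v : V} (hv : v ∈ CandSet G f i) :
    col v = none := by
  rw [← Option.not_isSome_iff_eq_none]
  intro hs
  obtain ⟨j, hj, hor⟩ := (inv.dom v).mp hs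
  have hsep := (mem_candSet.mp hv) j hj
  rcases hor with h | h
  · exact hsep.1 h
  · exact hsep.2.1 h.symm

lemma cand_nb_col_none (inv : BInv G d f col i) {v u : V} (hv : v ∈ CandSet G f i)
    (hu : u ∈ G.neighborFinset v) : col u = none := by
  rw [← Option.not_isSome_iff_eq_none]
  intro hs
  rw [SimpleGraph.mem_neighborFinset] at hu
  obtain ⟨j, hj, hor⟩ := (inv.dom u).mp hs
  have hsep := (mem_candSet.mp hv) j hj
  rcases hor with h | h
  · subst h; exact hsep.2.1 hu
  · exact hsep.2.2 u ⟨hu, h.symm⟩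

lemma cand_nb_nb_parts (inv : BInv G d f col i) {v u w : V} (hv : v ∈ CandSet G f i)
    (hu : u ∈ G.neighborFinset v) (hw : w ∈ G.neighborFinset u) (hws : (col w).isSome) :
    w ∈ PartsSet G f i := by
  rw [SimpleGraph.mem_neighborFinset] at hu hw
  obtain ⟨j, hj, hor⟩ := (inv.dom w).mp hws
  have hsep := (mem_candSet.mp hv) j hj
  rcases hor with h | h
  · exact absurd ⟨hu, by rw [← h] at hsep ⊢; exact hw⟩ (hsep.2.2 u)
  · exact Finset.mem_biUnion.mpr ⟨j, Finset.mem_range.mpr hj, (SimpleGraph.mem_neighborFinset _ _ _).mpr h⟩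

lemma cand_not_parts (inv : BInv G d f col i) {v : V} (hv : v ∈ CandSet G f i) :
    v ∉ PartsSet G f i := by
  intro hmem
  obtain ⟨j, hj, hadj⟩ := Finset.mem_biUnion.mp hmem
  rw [Finset.mem_range] at hj
  rw [SimpleGraph.mem_neighborFinset] at hadj
  exact ((mem_candSet.mp hv) j hj).2.1 hadj.symm

lemma parts_mem_col_isSome (inv : BInv G d f col i) {w : V} (hw : w ∈ PartsSet G f i) :
    (col w).isSome := by
  obtain ⟨j, hj, hadj⟩ := Finset.mem_biUnion.mp hw
  rw [Finset.mem_range] at hj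
  rw [SimpleGraph.mem_neighborFinset] at hadj
  exact (inv.dom w).mpr ⟨j, hj, Or.inr hadj⟩

lemma f_injOn (inv : BInv G d f col i) {j k : ℕ} (hj : j < i) (hk : k < i) (h : f j = f k) :
    j = k := by
  by_contra hne
  exact (inv.sep j hj k hk hne).1 h

lemma parts_card (inv : BInv G d f col i) (hreg : G.IsRegularOfDegree d) :
    (PartsSet G f i).card = i * d := by
  rw [PartsSet, Finset.card_biUnion, Finset.sum_congr rfl (fun j _ => NBcard hreg (f j)),
    Finset.sum_const, Finset.card_range, smul_eq_mul]
  intro j hj k hk hne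
  rw [Finset.mem_coe, Finset.mem_range] at hj hk
  rw [Function.onFun, Finset.disjoint_left]
  intro u hu1 hu2
  rw [SimpleGraph.mem_neighborFinset] at hu1 hu2
  exact (inv.sep j hj k hk hne).2.2 u ⟨hu1, hu2.symm⟩

lemma double_count (A B : Finset V) :
    ∑ u ∈ A, (G.neighborFinset u ∩ B).card = ∑ p ∈ B, (G.neighborFinset p ∩ A).card := by
  have h1 : ∀ (u : V) (B : Finset V), (G.neighborFinset u ∩ B).card
      = ∑ p ∈ B, (if G.Adj u p then 1 else 0) := by
    intro u B
    rw [← Finset.card_filter]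
    congr 1
    ext p
    simp [Finset.mem_inter, SimpleGraph.mem_neighborFinset, and_comm]
  simp only [h1]
  rw [Finset.sum_comm]
  refine Finset.sum_congr rfl fun p _ => Finset.sum_congr rfl fun u _ => ?_
  simp [G.adj_comm]

lemma cross_sum (inv : BInv G d f col i) (hreg : G.IsRegularOfDegree d) :
    ∑ v ∈ CandSet G f i, crossN G f i v ≤ (d-1) * (i * (d * (d-1))) := by
  classical
  set P := PartsSet G f i with hP
  set X := CandSet G f i with hX
  set Cen := (Finset.range i).image f with hCen
  set g : V → ℕ := fun u => (G.neighborFinset u ∩ P).card with hg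
  have stepA : ∑ v ∈ X, crossN G f i v
      = ∑ u ∈ univ, (X.filter (fun v => G.Adj v u)).card * g u := by
    have h1 : ∀ v, crossN G f i v = ∑ u ∈ univ, if G.Adj v u then g u else 0 := by
      intro v
      rw [crossN, SimpleGraph.neighborFinset_eq_filter, Finset.sum_filter]
    simp only [h1]
    rw [Finset.sum_comm]
    refine Finset.sum_congr rfl fun u _ => ?_
    rw [← Finset.sum_filter, Finset.sum_const, smul_eq_mul]
  have stepB : ∀ u ∈ (univ : Finset V), (X.filter (fun v => G.Adj v u)).card * g u
      ≤ (if u ∈ Cen then 0 else (d-1) * g u) := by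
    intro u _
    by_cases hc : u ∈ Cen
    · rw [if_pos hc]
      obtain ⟨j, hj, hfj⟩ := Finset.mem_image.mp hc
      rw [Finset.mem_range] at hj
      have : X.filter (fun v => G.Adj v u) = ∅ := by
        rw [Finset.filter_eq_empty_iff]
        intro v hv hadj
        exact ((mem_candSet.mp hv) j hj).2.1 (by rwa [hfj])
      rw [this]; simp
    · rw [if_neg hc]
      rcases Nat.eq_zero_or_pos (g u) with h0 | hpos
      · rw [h0]; simp
      · have hsub : X.filter (fun v => G.Adj v u) ⊆ G.neighborFinset u \ P := by
          intro v hv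
          rw [Finset.mem_filter] at hv
          rw [Finset.mem_sdiff, SimpleGraph.mem_neighborFinset]
          exact ⟨hv.2.symm, cand_not_parts inv hv.1⟩
        have h2 : g u + (G.neighborFinset u \ P).card
            = (G.neighborFinset u).card := Finset.card_inter_add_card_sdiff _ _
        have h3 := Finset.card_le_card hsub
        have h4 := NBcard hreg u
        have h5 : (X.filter (fun v => G.Adj v u)).card ≤ d - 1 := by omega
        exact Nat.mul_le_mul_right _ h5
  have stepC : ∑ u ∈ (univ : Finset V), (if u ∈ Cen then 0 else (d-1) * g u)
      = (d-1) * ∑ u ∈ univ \ Cen, g u := by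
    rw [Finset.sum_ite, Finset.sum_const_zero, zero_add, Finset.mul_sum]
    congr 1
    rw [Finset.sdiff_eq_filter]
  have hsum_univ : ∑ u ∈ (univ : Finset V), g u = i * d * d := by
    have := double_count (G := G) univ P
    simp only [hg]
    rw [this]
    have : ∀ p ∈ P, (G.neighborFinset p ∩ univ).card = d := by
      intro p _
      rw [Finset.inter_univ]; exact NBcard hreg p
    rw [Finset.sum_congr rfl this, Finset.sum_const, smul_eq_mul, parts_card inv hreg]
  have hsum_cen : ∑ u ∈ Cen, g u = i * d := by
    rw [hCen, Finset.sum_image]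
    · have : ∀ j ∈ Finset.range i, g (f j) = d := by
        intro j hj
        rw [Finset.mem_range] at hj
        have hsub : G.neighborFinset (f j) ⊆ P := by
          rw [hP, PartsSet]
          exact Finset.subset_biUnion_of_mem (fun j => G.neighborFinset (f j)) (Finset.mem_range.mpr hj)
        rw [hg]
        simp only []
        rw [Finset.inter_eq_left.mpr hsub]
        exact NBcard hreg (f j)
      rw [Finset.sum_congr rfl this, Finset.sum_const, smul_eq_mul, Finset.card_range]
    · intro x hx y hy hxy
      exact f_injOn inv (Finset.mem_range.mp hx) (Finset.mem_range.mp hy) hxy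
  have hsdiff : (∑ u ∈ univ \ Cen, g u) + ∑ u ∈ Cen, g u = ∑ u ∈ (univ : Finset V), g u :=
    Finset.sum_sdiff (Finset.subset_univ _)
  have hdd : d * (d-1) + d = d * d := by
    cases d with
    | zero => rfl
    | succ n => simp [Nat.succ_sub_one]; ring
  have e4 : i * (d * (d-1)) + i * d = i * d * d := by
    rw [← Nat.mul_add, hdd, Nat.mul_assoc]
  have stepD : ∑ u ∈ univ \ Cen, g u ≤ i * (d * (d-1)) := by
    rw [hsum_cen, hsum_univ] at hsdiff
    omega
  calc ∑ v ∈ X, crossN G f i v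
      = ∑ u ∈ univ, (X.filter (fun v => G.Adj v u)).card * g u := stepA
    _ ≤ ∑ u ∈ (univ : Finset V), (if u ∈ Cen then 0 else (d-1) * g u) :=
        Finset.sum_le_sum stepB
    _ = (d-1) * ∑ u ∈ univ \ Cen, g u := stepC
    _ ≤ (d-1) * (i * (d * (d-1))) := Nat.mul_le_mul_left _ stepD

lemma toFinset_card_ite (o : Option ℕ) : o.toFinset.card = if o.isSome then 1 else 0 := by
  cases o <;> simp

lemma Fco_card_le (u : V) :
    (Fco G col u).card ≤ ((G.neighborFinset u).filter (fun w => (col w).isSome)).card := by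
  refine le_trans Finset.card_biUnion_le ?_
  rw [Finset.card_filter]
  refine le_of_eq (Finset.sum_congr rfl fun w _ => toFinset_card_ite _)

lemma sum_F_le_cross (inv : BInv G d f col i) {v : V} (hv : v ∈ CandSet G f i) (C : Finset ℕ) :
    ∑ u ∈ G.neighborFinset v, (Fco G col u ∩ C).card ≤ crossN G f i v := by
  refine Finset.sum_le_sum fun u hu => ?_
  refine le_trans (Finset.card_le_card (Finset.inter_subset_left)) ?_
  refine le_trans (Fco_card_le u) (Finset.card_le_card ?_)
  intro w hw
  rw [Finset.mem_filter] at hw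
  rw [Finset.mem_inter]
  exact ⟨hw.1, cand_nb_nb_parts inv hv hu hw.1 hw.2⟩

lemma Fco_card_lt (inv : BInv G d f col i) (hreg : G.IsRegularOfDegree d) (hd1 : 1 ≤ d)
    {v u : V} (hv : v ∈ CandSet G f i) (hu : u ∈ G.neighborFinset v) (C : Finset ℕ) :
    (Fco G col u ∩ C).card < d := by
  have h1 : (Fco G col u ∩ C).card ≤ ((G.neighborFinset u).filter (fun w => (col w).isSome)).card :=
    le_trans (Finset.card_le_card (Finset.inter_subset_left)) (Fco_card_le u)
  have hsub : (G.neighborFinset u).filter (fun w => (col w).isSome) ⊆ (G.neighborFinset u).erase v := by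
    intro w hw
    rw [Finset.mem_filter] at hw
    rw [Finset.mem_erase]
    refine ⟨?_, hw.1⟩
    intro he
    rw [he, cand_col_none inv hv] at hw
    simp at hw
  have h2 := Finset.card_le_card hsub
  have hvmem : v ∈ G.neighborFinset u := by
    rw [SimpleGraph.mem_neighborFinset] at hu ⊢
    exact hu.symm
  rw [Finset.card_erase_of_mem hvmem, NBcard hreg u] at h2
  omega

lemma common_imp_sum_ge (hreg : G.IsRegularOfDegree d) {v : V} {C : Finset ℕ}
    (h : ∃ c ∈ C, ∀ u ∈ G.neighborFinset v, c ∈ Fco G col u) :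
    d ≤ ∑ u ∈ G.neighborFinset v, (Fco G col u ∩ C).card := by
  obtain ⟨c, hcC, hall⟩ := h
  have hterm : ∀ u ∈ G.neighborFinset v, 1 ≤ (Fco G col u ∩ C).card := by
    intro u hu
    refine Finset.card_pos.mpr ⟨c, Finset.mem_inter.mpr ⟨hall u hu, hcC⟩⟩
  calc d = (G.neighborFinset v).card := (NBcard hreg v).symm
    _ = ∑ _u ∈ G.neighborFinset v, 1 := by rw [Finset.sum_const, smul_eq_mul, Nat.mul_one]
    _ ≤ ∑ u ∈ G.neighborFinset v, (Fco G col u ∩ C).card := Finset.sum_le_sum hterm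

lemma nocommon_patternfree (inv : BInv G d f col i) (hreg : G.IsRegularOfDegree d)
    (hd1 : 1 ≤ d) (hi : i ≤ d)
    (hpf : ∀ v u u' w : V, G.Adj v u → G.Adj v u' → u ≠ u' → G.Adj u w → G.Adj u' w → w = v)
    {v : V} (hv : v ∈ CandSet G f i) :
    ¬ ∃ c ∈ Cset d i, ∀ u ∈ G.neighborFinset v, c ∈ Fco G col u := by
  rintro ⟨c, hcC, hall⟩
  have hcC' : c < d + 1 ∧ c ≠ i := by
    rw [Cset, Finset.mem_erase, Finset.mem_range] at hcC
    exact ⟨hcC.2, hcC.1⟩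
  have hex : ∀ u ∈ G.neighborFinset v, ∃ w, G.Adj u w ∧ col w = some c :=
    fun u hu => mem_Fco.mp (hall u hu)
  choose! wfun hw1 hw2 using hex
  have hinj : ∀ u ∈ G.neighborFinset v, ∀ u' ∈ G.neighborFinset v, wfun u = wfun u' → u = u' := by
    intro u hu u' hu' heq
    by_contra hne
    have hadj_u := (SimpleGraph.mem_neighborFinset _ _ _).mp hu
    have hadj_u' := (SimpleGraph.mem_neighborFinset _ _ _).mp hu'
    have hwv : wfun u = v := hpf v u u' (wfun u) hadj_u hadj_u' hne (hw1 u hu) (heq ▸ hw1 u' hu')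
    have := hw2 u hu
    rw [hwv, cand_col_none inv hv] at this
    exact nomatch this
  have himg : ((G.neighborFinset v).image wfun).card = d := by
    rw [Finset.card_image_of_injOn (fun x hx y hy => hinj x hx y hy), NBcard hreg v]
  have hsub : (G.neighborFinset v).image wfun
      ⊆ (PartsSet G f i).filter (fun x => col x = some c) := by
    intro w hw
    obtain ⟨u, hu, rfl⟩ := Finset.mem_image.mp hw
    rw [Finset.mem_filter]
    have hwNB : wfun u ∈ G.neighborFinset u := (SimpleGraph.mem_neighborFinset _ _ _).mpr (hw1 u hu)
    refine ⟨cand_nb_nb_parts inv hv hu hwNB ?_, hw2 u hu⟩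
    rw [hw2 u hu]; rfl
  have hbound : ((PartsSet G f i).filter (fun x => col x = some c)).card ≤ d - 1 := by
    rw [PartsSet, Finset.filter_biUnion]
    refine le_trans Finset.card_biUnion_le ?_
    have hone : ∀ j < i, ((G.neighborFinset (f j)).filter (fun x => col x = some c)).card ≤ 1 := by
      intro j hj
      rw [Finset.card_le_one]
      intro a ha b hb
      rw [Finset.mem_filter] at ha hb
      exact inv.inj j hj a ha.1 b hb.1 (by rw [ha.2, hb.2])
    by_cases hci : c < i
    · have hzero : ((G.neighborFinset (f c)).filter (fun x => col x = some c)).card = 0 := by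
        rw [Finset.card_eq_zero, Finset.filter_eq_empty_iff]
        intro u hu hcu
        have hadj := (SimpleGraph.mem_neighborFinset _ _ _).mp hu
        have hp := inv.proper (f c) u hadj (by rw [inv.center c hci]; rfl)
        rw [inv.center c hci, hcu] at hp
        exact hp rfl
      have hcr : c ∈ Finset.range i := Finset.mem_range.mpr hci
      have hdec : ((G.neighborFinset (f c)).filter (fun x => col x = some c)).card
          + ∑ j ∈ (Finset.range i).erase c, ((G.neighborFinset (f j)).filter (fun x => col x = some c)).card
          = ∑ j ∈ Finset.range i, ((G.neighborFinset (f j)).filter (fun x => col x = some c)).card :=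
        Finset.add_sum_erase _ (fun j => ((G.neighborFinset (f j)).filter (fun x => col x = some c)).card) hcr
      have hrest : ∑ j ∈ (Finset.range i).erase c, ((G.neighborFinset (f j)).filter (fun x => col x = some c)).card
          ≤ ((Finset.range i).erase c).card * 1 := by
        refine Finset.sum_le_card_nsmul _ _ 1 ?_
        intro j hj
        exact hone j (Finset.mem_range.mp (Finset.mem_of_mem_erase hj))
      rw [Finset.card_erase_of_mem hcr, Finset.card_range] at hrest
      omega
    · have hid : i < d := by
        rcases Nat.lt_or_ge i d with h | h
        · exact h
        · exfalso
          have : i = d := le_antisymm hi h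
          subst this
          omega
      have : ∑ j ∈ Finset.range i, ((G.neighborFinset (f j)).filter (fun x => col x = some c)).card
          ≤ (Finset.range i).card * 1 := by
        refine Finset.sum_le_card_nsmul _ _ 1 ?_
        intro j hj
        exact hone j (Finset.mem_range.mp hj)
      rw [Finset.card_range] at this
      omega
  have := le_trans (Finset.card_le_card hsub) hbound
  omega

lemma exists_cand2 (inv : BInv G d f col i) (hreg : G.IsRegularOfDegree d) (hd : 4 ≤ d)
    (hi : i ≤ d) (hcard : 2*d^3 + 2*d ≤ Fintype.card V + 2*d^2) :
    ∃ v ∈ CandSet G f i, crossN G f i v ≤ d := by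
  by_contra hcon
  push_neg at hcon
  have hX1 := Finset.card_nsmul_le_sum (CandSet G f i) (crossN G f i) (d+1)
    (fun v hv => hcon v hv)
  simp only [smul_eq_mul] at hX1
  have hX2 := cross_sum inv hreg
  have hb : ∑ j ∈ Finset.range i, (ball2 G (f j)).card ≤ i * (d*d+1) := by
    have := Finset.sum_le_card_nsmul (Finset.range i) (fun j => (ball2 G (f j)).card) (d*d+1)
      (fun j _ => card_ball2 hreg (f j))
    simpa using this
  have hc := cand_card_lb (G := G) (f := f) (i := i)
  obtain ⟨e, rfl⟩ : ∃ e, d = e + 1 := ⟨d-1, by omega⟩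
  have he : 3 ≤ e := by omega
  simp only [Nat.add_sub_cancel] at hX1 hX2
  set x := (CandSet G f i).card
  set N := Fintype.card V
  nlinarith [hX1, hX2, hb, hc, hcard, hi, he, Nat.mul_le_mul_left (e+2) hc,
    Nat.mul_le_mul_left e (Nat.mul_le_mul_right ((e+1)*e) hi)]

lemma exists_cand1 (inv : BInv G d f col i) (hreg : G.IsRegularOfDegree d) (hd : 4 ≤ d)
    (hi : i ≤ d) (hcard : 2*d^3 + 2*d ≤ Fintype.card V + 2*d^2)
    (hball0 : 1 ≤ i → (ball2 G (f 0)).card ≤ d*d) :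
    ∃ v ∈ CandSet G f i, crossN G f i v ≤ d - 1 := by
  by_contra hcon
  push_neg at hcon
  have hcon' : ∀ v ∈ CandSet G f i, d ≤ crossN G f i v := by
    intro v hv
    have := hcon v hv
    omega
  have hX1 := Finset.card_nsmul_le_sum (CandSet G f i) (crossN G f i) d hcon'
  simp only [smul_eq_mul] at hX1
  have hX2 := cross_sum inv hreg
  have hc := cand_card_lb (G := G) (f := f) (i := i)
  rcases Nat.eq_zero_or_pos i with hi0 | hi1
  · subst hi0
    have hzero : ∑ v ∈ CandSet G f 0, crossN G f 0 v = 0 := by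
      simpa using hX2
    rw [hzero, Nat.le_zero] at hX1
    have hx : (CandSet G f 0).card = 0 := by
      rcases Nat.mul_eq_zero.mp hX1 with h | h
      · exact h
      · omega
    simp only [Finset.range_zero, Finset.sum_empty, Nat.add_zero] at hc
    rw [hx] at hc
    have hd3 : d * d^2 = d^3 := by ring
    nlinarith [hd, hc, hcard]
  · have hb : ∑ j ∈ Finset.range i, (ball2 G (f j)).card + 1 ≤ i * (d*d+1) := by
      have h0r : (0 : ℕ) ∈ Finset.range i := Finset.mem_range.mpr hi1
      have hdec : (ball2 G (f 0)).card + ∑ j ∈ (Finset.range i).erase 0, (ball2 G (f j)).card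
          = ∑ j ∈ Finset.range i, (ball2 G (f j)).card :=
        Finset.add_sum_erase _ (fun j => (ball2 G (f j)).card) h0r
      have hrest : ∑ j ∈ (Finset.range i).erase 0, (ball2 G (f j)).card
          ≤ ((Finset.range i).erase 0).card * (d*d+1) :=
        Finset.sum_le_card_nsmul _ _ _ (fun j _ => card_ball2 hreg (f j))
      rw [Finset.card_erase_of_mem h0r, Finset.card_range] at hrest
      have hb0 := hball0 hi1
      have hmul : (i - 1) * (d*d+1) + (d*d+1) = i * (d*d+1) := by
        have hii : i - 1 + 1 = i := by omega
        calc (i-1)*(d*d+1) + (d*d+1) = ((i-1)+1)*(d*d+1) := by ring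
          _ = i * (d*d+1) := by rw [hii]
      omega
    obtain ⟨e, rfl⟩ : ∃ e, d = e + 1 := ⟨d-1, by omega⟩
    have he : 3 ≤ e := by omega
    simp only [Nat.add_sub_cancel] at hX1 hX2
    set x := (CandSet G f i).card
    set N := Fintype.card V
    nlinarith [hX1, hX2, hb, hc, hcard, hi, he, hi1]

lemma ball2_small_of_pattern (hreg : G.IsRegularOfDegree d) (hd1 : 1 ≤ d)
    {v u u' w : V} (h1 : G.Adj v u) (h2 : G.Adj v u') (h3 : u ≠ u')
    (h4 : G.Adj u w) (h5 : G.Adj u' w) (h6 : w ≠ v) :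
    (ball2 G v).card ≤ d*d := by
  classical
  set t : V → Finset V := fun x => (G.neighborFinset x).erase v with ht
  have hu : u ∈ G.neighborFinset v := (SimpleGraph.mem_neighborFinset _ _ _).mpr h1
  have hu' : u' ∈ G.neighborFinset v := (SimpleGraph.mem_neighborFinset _ _ _).mpr h2
  have hwu : w ∈ t u := by
    rw [ht]; simp only [Finset.mem_erase, SimpleGraph.mem_neighborFinset]
    exact ⟨h6, h4⟩
  have hwu' : w ∈ t u' := by
    rw [ht]; simp only [Finset.mem_erase, SimpleGraph.mem_neighborFinset]
    exact ⟨h6, h5⟩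
  have hsplit : (G.neighborFinset v).biUnion t ⊆ (t u).erase w ∪ ((G.neighborFinset v).erase u).biUnion t := by
    intro x hx
    obtain ⟨a, ha, hxa⟩ := Finset.mem_biUnion.mp hx
    rw [Finset.mem_union]
    by_cases hau : a = u
    · subst hau
      by_cases hxw : x = w
      · subst hxw
        right
        exact Finset.mem_biUnion.mpr ⟨u', Finset.mem_erase.mpr ⟨Ne.symm h3, hu'⟩, hwu'⟩
      · left
        exact Finset.mem_erase.mpr ⟨hxw, hxa⟩
    · right
      exact Finset.mem_biUnion.mpr ⟨a, Finset.mem_erase.mpr ⟨hau, ha⟩, hxa⟩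
  have htcard : ∀ x ∈ G.neighborFinset v, (t x).card = d - 1 := by
    intro x hx
    rw [ht]
    simp only []
    rw [Finset.card_erase_of_mem, NBcard hreg x]
    rw [SimpleGraph.mem_neighborFinset] at hx ⊢
    exact hx.symm
  have hkey : ((G.neighborFinset v).biUnion t).card ≤ d * (d-1) - 1 := by
    have hc1 := Finset.card_le_card hsplit
    have hc2 := Finset.card_union_le ((t u).erase w) (((G.neighborFinset v).erase u).biUnion t)
    have hc3 : (((G.neighborFinset v).erase u).biUnion t).card
        ≤ ∑ x ∈ (G.neighborFinset v).erase u, (t x).card := Finset.card_biUnion_le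
    have hc4 : ∑ x ∈ (G.neighborFinset v).erase u, (t x).card
        ≤ ((G.neighborFinset v).erase u).card * (d-1) := by
      refine Finset.sum_le_card_nsmul _ _ _ ?_
      intro x hx
      exact le_of_eq (htcard x (Finset.mem_of_mem_erase hx))
    rw [Finset.card_erase_of_mem hu, NBcard hreg v] at hc4
    have hc5 : ((t u).erase w).card = (t u).card - 1 := Finset.card_erase_of_mem hwu
    have hc6 := htcard u hu
    have hc7 : 1 ≤ d - 1 := by
      have := htcard u hu
      have : 0 < (t u).card := Finset.card_pos.mpr ⟨w, hwu⟩
      omega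
    have hdd : (d-1) * (d-1) + (d - 1) = d * (d-1) := by
      cases d with
      | zero => rfl
      | succ n => simp [Nat.succ_sub_one]; ring
    omega
  have hb2 : ball2 G v = insert v ((G.neighborFinset v) ∪ (G.neighborFinset v).biUnion t) := rfl
  have h1' : (ball2 G v).card ≤ 1 + ((G.neighborFinset v).card + ((G.neighborFinset v).biUnion t).card) := by
    rw [hb2]
    refine le_trans (Finset.card_insert_le _ _) ?_
    have := Finset.card_union_le (G.neighborFinset v) ((G.neighborFinset v).biUnion t)
    omega
  have hnb := NBcard hreg v
  have hdd : d * (d-1) + d = d * d := by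
    cases d with
    | zero => rfl
    | succ n => simp [Nat.succ_sub_one]; ring
  have hd2 : 2 ≤ d * (d-1) := by
    have hpair : ({u, u'} : Finset V) ⊆ G.neighborFinset v := by
      intro x hx
      rcases Finset.mem_insert.mp hx with h | h
      · subst h; exact hu
      · rw [Finset.mem_singleton.mp h]; exact hu'
    have hpc : ({u, u'} : Finset V).card = 2 := by
      rw [Finset.card_insert_of_notMem (by simp [h3]), Finset.card_singleton]
    have hc7 : 2 ≤ d := by
      have := Finset.card_le_card hpair
      rw [hpc, hnb] at this
      exact this
    have : 2 * 1 ≤ d * (d - 1) := Nat.mul_le_mul hc7 (by omega)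
    omega
  omega

lemma card_Cset (hi : i ≤ d) : (Cset d i).card = d := by
  rw [Cset, Finset.card_erase_of_mem (Finset.mem_range.mpr (by omega)), Finset.card_range]
  omega

lemma step_lemma (inv : BInv G d f col i) (hreg : G.IsRegularOfDegree d) (hd : 4 ≤ d)
    (hi : i ≤ d) {v0 : V} (hv0 : v0 ∈ CandSet G f i)
    (hfeas : ∑ u ∈ G.neighborFinset v0, (Fco G col u ∩ Cset d i).card ≤ d)
    (hcom : ¬ ∃ c ∈ Cset d i, ∀ u ∈ G.neighborFinset v0, c ∈ Fco G col u) :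
    ∃ col' : V → Option ℕ, BInv G d (Function.update f i v0) col' (i+1)
      ∧ (∀ v, (col v).isSome → col' v = col v) := by
  classical
  have hd1 : 1 ≤ d := by omega
  have hNB : (G.neighborFinset v0).card = d := NBcard hreg v0
  obtain ⟨g, hginj, hgmem⟩ := sdr_two (G.neighborFinset v0) (Cset d i) (Fco G col)
    (by rw [hNB, card_Cset hi])
    (by rw [hNB]; exact hfeas)
    (by intro u hu; rw [hNB]; exact Fco_card_lt inv hreg hd1 hv0 hu _)
    hcom

  have hv0none : col v0 = none := cand_col_none inv hv0
  have hnbnone : ∀ u ∈ G.neighborFinset v0, col u = none := fun u hu => cand_nb_col_none inv hv0 hu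
  have hnotself : v0 ∉ G.neighborFinset v0 := by
    rw [SimpleGraph.mem_neighborFinset]; exact G.irrefl
  have hgC : ∀ u ∈ G.neighborFinset v0, g u < d + 1 ∧ g u ≠ i := by
    intro u hu
    have := (hgmem u hu).1
    rw [Cset, Finset.mem_erase, Finset.mem_range] at this
    exact ⟨this.2, this.1⟩
  have hsurj : ∀ c ∈ Cset d i, ∃ u ∈ G.neighborFinset v0, g u = c := by
    intro c hc
    have hsub : (G.neighborFinset v0).image g ⊆ Cset d i := by
      intro x hx
      obtain ⟨u, hu, rfl⟩ := Finset.mem_image.mp hx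
      exact (hgmem u hu).1
    have hcardim : ((G.neighborFinset v0).image g).card = d := by
      rw [Finset.card_image_of_injOn (fun x hx y hy => hginj x hx y hy), hNB]
    have heq : (G.neighborFinset v0).image g = Cset d i :=
      Finset.eq_of_subset_of_card_le hsub (by rw [hcardim, card_Cset hi])
    rw [← heq] at hc
    obtain ⟨u, hu, hgu⟩ := Finset.mem_image.mp hc
    exact ⟨u, hu, hgu⟩
  set f' := Function.update f i v0 with hf'def
  have hf' : ∀ j, j < i → f' j = f j := fun j hj => Function.update_of_ne (by omega) _ _
  have hf'i : f' i = v0 := Function.update_self _ _ _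
  set col' : V → Option ℕ := fun v => if v = v0 then some i
    else if v ∈ G.neighborFinset v0 then some (g v) else col v with hcol'def
  have hcol'v0 : col' v0 = some i := by rw [hcol'def]; simp
  have hcol'nb : ∀ u ∈ G.neighborFinset v0, col' u = some (g u) := by
    intro u hu
    have hne : u ≠ v0 := fun h => hnotself (h ▸ hu)
    rw [hcol'def]
    simp only [if_neg hne, if_pos hu]
  have hcol'else : ∀ v, v ≠ v0 → v ∉ G.neighborFinset v0 → col' v = col v := by
    intro v h1 h2
    rw [hcol'def]
    simp only [if_neg h1, if_neg h2]
  have hext : ∀ v, (col v).isSome → col' v = col v := by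
    intro v hs
    have h1 : v ≠ v0 := by
      intro h; rw [h, hv0none] at hs; simp at hs
    have h2 : v ∉ G.neighborFinset v0 := by
      intro h; rw [hnbnone v h] at hs; simp at hs
    exact hcol'else v h1 h2
  have hsep0 : ∀ j < i, Sep3 G v0 (f j) := mem_candSet.mp hv0
  refine ⟨col', ?_, hext⟩
  constructor
  · -- sep
    intro j hj k hk hne
    rcases Nat.lt_succ_iff_lt_or_eq.mp hj with hj' | hj' <;>
      rcases Nat.lt_succ_iff_lt_or_eq.mp hk with hk' | hk'
    · rw [hf' j hj', hf' k hk']; exact inv.sep j hj' k hk' hne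
    · subst hk'; rw [hf' j hj', hf'i]; exact sep3_symm G (hsep0 j hj')
    · subst hj'; rw [hf' k hk', hf'i]; exact hsep0 k hk'
    · omega
  · -- dom
    intro v
    constructor
    · intro hs
      by_cases h1 : v = v0
      · exact ⟨i, Nat.lt_succ_self i, Or.inl (by rw [hf'i, h1])⟩
      · by_cases h2 : v ∈ G.neighborFinset v0
        · refine ⟨i, Nat.lt_succ_self i, Or.inr ?_⟩
          rw [hf'i]
          exact (SimpleGraph.mem_neighborFinset _ _ _).mp h2
        · rw [hcol'else v h1 h2] at hs
          obtain ⟨j, hj, hor⟩ := (inv.dom v).mp hs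
          exact ⟨j, by omega, by rw [hf' j hj]; exact hor⟩
    · rintro ⟨j, hj, hor⟩
      by_cases h1 : v = v0
      · rw [h1, hcol'v0]; rfl
      · by_cases h2 : v ∈ G.neighborFinset v0
        · rw [hcol'nb v h2]; rfl
        · rw [hcol'else v h1 h2]
          rcases Nat.lt_succ_iff_lt_or_eq.mp hj with hj' | hj'
          · refine (inv.dom v).mpr ⟨j, hj', ?_⟩
            rw [hf' j hj'] at hor
            exact hor
          · exfalso
            subst hj'
            rw [hf'i] at hor
            rcases hor with h | h
            · exact h1 h
            · exact h2 ((SimpleGraph.mem_neighborFinset _ _ _).mpr h)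
  · -- center
    intro j hj
    rcases Nat.lt_succ_iff_lt_or_eq.mp hj with hj' | hj'
    · rw [hf' j hj']
      have hne : f j ≠ v0 := fun h => (hsep0 j hj').1 h.symm
      have hnnb : f j ∉ G.neighborFinset v0 := by
        intro h
        exact (hsep0 j hj').2.1 ((SimpleGraph.mem_neighborFinset _ _ _).mp h)
      rw [hcol'else _ hne hnnb]
      exact inv.center j hj'
    · subst hj'; rw [hf'i]; exact hcol'v0
  · -- proper
    intro u v hadj hs
    by_cases hu0 : u = v0
    · have hvnb : v ∈ G.neighborFinset v0 := by
        rw [SimpleGraph.mem_neighborFinset]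
        rw [hu0] at hadj
        exact hadj
      rw [hu0, hcol'v0, hcol'nb v hvnb]
      intro h
      exact (hgC v hvnb).2 (Option.some_injective _ h).symm
    · by_cases hunb : u ∈ G.neighborFinset v0
      · rw [hcol'nb u hunb]
        by_cases hv0' : v = v0
        · rw [hv0', hcol'v0]
          intro h
          exact (hgC u hunb).2 (Option.some_injective _ h)
        · by_cases hvnb : v ∈ G.neighborFinset v0
          · rw [hcol'nb v hvnb]
            intro h
            exact (G.ne_of_adj hadj) (hginj u hunb v hvnb (Option.some_injective _ h))
          · rw [hcol'else v hv0' hvnb]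
            cases hcv : col v with
            | none => simp
            | some c =>
                intro h
                have hcF : c ∈ Fco G col u := mem_Fco.mpr ⟨v, hadj, hcv⟩
                rw [← Option.some_injective _ h] at hcF
                exact (hgmem u hunb).2 hcF
      · have hucol : col' u = col u := hcol'else u hu0 hunb
        rw [hucol] at hs ⊢
        by_cases hv0' : v = v0
        · exfalso
          apply hunb
          rw [SimpleGraph.mem_neighborFinset]
          rw [hv0'] at hadj
          exact hadj.symm
        · by_cases hvnb : v ∈ G.neighborFinset v0
          · rw [hcol'nb v hvnb]
            obtain ⟨c, hc⟩ := Option.isSome_iff_exists.mp hs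
            rw [hc]
            intro h
            have hcF : c ∈ Fco G col v := mem_Fco.mpr ⟨u, hadj.symm, hc⟩
            rw [Option.some_injective _ h] at hcF
            exact (hgmem v hvnb).2 hcF
          · rw [hcol'else v hv0' hvnb]
            exact inv.proper u v hadj hs
  · -- rainbow
    intro j hj c hc hcj
    rcases Nat.lt_succ_iff_lt_or_eq.mp hj with hj' | hj'
    · obtain ⟨u, hadj, hcu⟩ := inv.rainbow j hj' c hc hcj
      refine ⟨u, by rw [hf' j hj']; exact hadj, ?_⟩
      rw [hext u (by rw [hcu]; rfl)]
      exact hcu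
    · have hcC : c ∈ Cset d i := by
        rw [Cset, Finset.mem_erase, Finset.mem_range]
        refine ⟨by rw [← hj']; exact hcj, by omega⟩
      obtain ⟨u, hu, hgu⟩ := hsurj c hcC
      refine ⟨u, ?_, ?_⟩
      · rw [hj', hf'i]
        exact (SimpleGraph.mem_neighborFinset _ _ _).mp hu
      · rw [hcol'nb u hu, hgu]
  · -- inj
    intro j hj u hu u' hu' heq
    rcases Nat.lt_succ_iff_lt_or_eq.mp hj with hj' | hj'
    · rw [hf' j hj'] at hu hu'
      have hsu : (col u).isSome := (inv.dom u).mpr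
        ⟨j, hj', Or.inr ((SimpleGraph.mem_neighborFinset _ _ _).mp hu)⟩
      have hsu' : (col u').isSome := (inv.dom u').mpr
        ⟨j, hj', Or.inr ((SimpleGraph.mem_neighborFinset _ _ _).mp hu')⟩
      rw [hext u hsu, hext u' hsu'] at heq
      exact inv.inj j hj' u hu u' hu' heq
    · subst hj'
      rw [hf'i] at hu hu'
      rw [hcol'nb u hu, hcol'nb u' hu'] at heq
      exact hginj u hu u' hu' (Option.some_injective _ heq)
  · -- lt
    intro v c h
    by_cases h1 : v = v0
    · rw [h1, hcol'v0] at h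
      have : c = i := (Option.some_injective _ h).symm
      omega
    · by_cases h2 : v ∈ G.neighborFinset v0
      · rw [hcol'nb v h2] at h
        have : c = g v := (Option.some_injective _ h).symm
        subst this
        exact (hgC v h2).1
      · rw [hcol'else v h1 h2] at h
        exact inv.lt v c h

lemma base_inv (hne : Nonempty V) :
    ∃ (f : ℕ → V) (col : V → Option ℕ), BInv G d f col 0 := by
  refine ⟨fun _ => Classical.arbitrary V, fun _ => none, ?_⟩
  constructor
  · intro j hj; omega
  · intro v; simp
  · intro j hj; omega
  · intro u v _ hs; simp at hs
  · intro j hj; omega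
  · intro j hj; omega
  · intro v c h; simp at h

lemma col_none_zero {f : ℕ → V} {col : V → Option ℕ} (inv : BInv G d f col 0) :
    ∀ v, col v = none := by
  intro v
  rw [← Option.not_isSome_iff_eq_none]
  intro hs
  obtain ⟨j, hj, _⟩ := (inv.dom v).mp hs
  omega

lemma step0 (hreg : G.IsRegularOfDegree d) (hd : 4 ≤ d) {f : ℕ → V} {col : V → Option ℕ}
    (inv : BInv G d f col 0) (v₀ : V) :
    ∃ col' : V → Option ℕ, BInv G d (Function.update f 0 v₀) col' 1 := by
  have hnone := col_none_zero inv
  have hFco : ∀ u : V, Fco G col u = ∅ := by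
    intro u
    rw [Fco, Finset.eq_empty_iff_forall_notMem]
    intro c hc
    obtain ⟨w, _, hw⟩ := Finset.mem_biUnion.mp hc
    rw [hnone w] at hw
    simp at hw
  have hv0 : v₀ ∈ CandSet G f 0 := by
    rw [mem_candSet]
    intro j hj
    omega
  have hfeas : ∑ u ∈ G.neighborFinset v₀, (Fco G col u ∩ Cset d 0).card ≤ d := by
    have : ∀ u ∈ G.neighborFinset v₀, (Fco G col u ∩ Cset d 0).card = 0 := by
      intro u _
      rw [hFco]
      simp
    rw [Finset.sum_congr rfl this]
    simp
  have hcom : ¬ ∃ c ∈ Cset d 0, ∀ u ∈ G.neighborFinset v₀, c ∈ Fco G col u := by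
    rintro ⟨c, _, hall⟩
    have : (G.neighborFinset v₀).Nonempty := by
      rw [← Finset.card_pos, NBcard hreg]
      omega
    obtain ⟨u, hu⟩ := this
    have := hall u hu
    rw [hFco] at this
    simp at this
  obtain ⟨col', inv', _⟩ := step_lemma inv hreg hd (by omega) hv0 hfeas hcom
  exact ⟨col', inv'⟩

lemma build2 (hreg : G.IsRegularOfDegree d) (hd : 4 ≤ d)
    (hcard : 2*d^3 + 2*d ≤ Fintype.card V + 2*d^2)
    (hpf : ∀ v u u' w : V, G.Adj v u → G.Adj v u' → u ≠ u' → G.Adj u w → G.Adj u' w → w = v)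
    (hne : Nonempty V) :
    ∀ i, i ≤ d + 1 → ∃ (f : ℕ → V) (col : V → Option ℕ), BInv G d f col i := by
  intro i
  induction i with
  | zero => intro _; exact base_inv hne
  | succ n ih =>
      intro hn1
      have hn : n ≤ d := by omega
      obtain ⟨f, col, inv⟩ := ih (by omega)
      obtain ⟨v0, hv0, hcross⟩ := exists_cand2 inv hreg hd hn hcard
      have hfeas : ∑ u ∈ G.neighborFinset v0, (Fco G col u ∩ Cset d n).card ≤ d :=
        le_trans (sum_F_le_cross inv hv0 _) hcross
      have hcom := nocommon_patternfree inv hreg (by omega) hn hpf hv0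
      obtain ⟨col', inv', _⟩ := step_lemma inv hreg hd hn hv0 hfeas hcom
      exact ⟨_, col', inv'⟩

lemma build1 (hreg : G.IsRegularOfDegree d) (hd : 4 ≤ d)
    (hcard : 2*d^3 + 2*d ≤ Fintype.card V + 2*d^2)
    (v₀ : V) (hball : (ball2 G v₀).card ≤ d*d) :
    ∀ i, i ≤ d + 1 → ∃ (f : ℕ → V) (col : V → Option ℕ),
      BInv G d f col i ∧ (1 ≤ i → f 0 = v₀) := by
  intro i
  induction i with
  | zero =>
      intro _
      obtain ⟨f, col, inv⟩ := base_inv (G := G) (d := d) ⟨v₀⟩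
      exact ⟨f, col, inv, by omega⟩
  | succ n ih =>
      intro hn1
      have hn : n ≤ d := by omega
      obtain ⟨f, col, inv, hf0⟩ := ih (by omega)
      rcases Nat.eq_zero_or_pos n with h0 | hpos
      · subst h0
        obtain ⟨col', inv'⟩ := step0 hreg hd inv v₀
        refine ⟨Function.update f 0 v₀, col', inv', fun _ => Function.update_self _ _ _⟩
      · have hf0' := hf0 hpos
        have hball0 : 1 ≤ n → (ball2 G (f 0)).card ≤ d*d := by
          intro _
          rw [hf0']
          exact hball
        obtain ⟨v0, hv0, hcross⟩ := exists_cand1 inv hreg hd hn hcard hball0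
        have hfeas' : ∑ u ∈ G.neighborFinset v0, (Fco G col u ∩ Cset d n).card ≤ d - 1 :=
          le_trans (sum_F_le_cross inv hv0 _) hcross
        have hfeas : ∑ u ∈ G.neighborFinset v0, (Fco G col u ∩ Cset d n).card ≤ d := by omega
        have hcom : ¬ ∃ c ∈ Cset d n, ∀ u ∈ G.neighborFinset v0, c ∈ Fco G col u := by
          intro hc
          have := common_imp_sum_ge hreg (v := v0) hc
          omega
        obtain ⟨col', inv', _⟩ := step_lemma inv hreg hd hn hv0 hfeas hcom
        refine ⟨Function.update f n v0, col', inv', ?_⟩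
        intro _
        rw [Function.update_of_ne (by omega), hf0']

lemma extend_coloring (hreg : G.IsRegularOfDegree d) (hd : 4 ≤ d) :
    ∀ (n : ℕ) (col : V → Option ℕ),
    (univ.filter (fun v => col v = none)).card = n →
    (∀ u v, G.Adj u v → (col u).isSome → col u ≠ col v) →
    (∀ v c, col v = some c → c < d + 1) →
    ∃ col' : V → Option ℕ, (∀ v, (col' v).isSome)
      ∧ (∀ v, (col v).isSome → col' v = col v)
      ∧ (∀ u v, G.Adj u v → (col' u).isSome → col' u ≠ col' v)
      ∧ (∀ v c, col' v = some c → c < d + 1) := by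
  intro n
  induction n with
  | zero =>
      intro col hcount hproper hlt
      refine ⟨col, ?_, fun v _ => rfl, hproper, hlt⟩
      intro v
      have hempty : univ.filter (fun v => col v = none) = ∅ := Finset.card_eq_zero.mp hcount
      by_contra h
      have hnone : col v = none := Option.not_isSome_iff_eq_none.mp h
      have : v ∈ univ.filter (fun v => col v = none) :=
        Finset.mem_filter.mpr ⟨Finset.mem_univ v, hnone⟩
      rw [hempty] at this
      exact Finset.notMem_empty v this
  | succ m ih =>
      intro col hcount hproper hlt
      have hne : (univ.filter (fun v => col v = none)).Nonempty := by
        rw [← Finset.card_pos, hcount]; omega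
      obtain ⟨v₀, hv₀mem⟩ := hne
      have hv₀ : col v₀ = none := (Finset.mem_filter.mp hv₀mem).2
      have husedcard : (Fco G col v₀).card ≤ d := by
        refine le_trans (Fco_card_le v₀) ?_
        refine le_trans (Finset.card_le_card (Finset.filter_subset _ _)) ?_
        rw [NBcard hreg]
      have hcd : ((Finset.range (d+1)) \ (Fco G col v₀)).Nonempty := by
        rw [Finset.sdiff_nonempty]
        intro hsub
        have := Finset.card_le_card hsub
        rw [Finset.card_range] at this
        omega
      obtain ⟨c, hc⟩ := hcd
      rw [Finset.mem_sdiff, Finset.mem_range] at hc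
      set col1 := Function.update col v₀ (some c) with hcol1
      have hcol1v₀ : col1 v₀ = some c := Function.update_self _ _ _
      have hcol1ne : ∀ v, v ≠ v₀ → col1 v = col v := by
        intro v hv
        exact Function.update_of_ne hv _ _
      have hcount1 : (univ.filter (fun v => col1 v = none)).card = m := by
        have : univ.filter (fun v => col1 v = none) = (univ.filter (fun v => col v = none)).erase v₀ := by
          ext x
          rw [Finset.mem_erase, Finset.mem_filter, Finset.mem_filter]
          constructor
          · intro hx
            have hxne : x ≠ v₀ := by
              intro h
              rw [h, hcol1v₀] at hx
              exact nomatch hx.2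
            rw [hcol1ne x hxne] at hx
            exact ⟨hxne, hx⟩
          · intro hx
            rw [hcol1ne x hx.1]
            exact ⟨hx.2.1, hx.2.2⟩
        rw [this, Finset.card_erase_of_mem hv₀mem, hcount]
        omega
      have hproper1 : ∀ u v, G.Adj u v → (col1 u).isSome → col1 u ≠ col1 v := by
        intro u v hadj hs
        by_cases hu : u = v₀
        · have hvne : v ≠ v₀ := by
            intro h
            rw [hu, h] at hadj
            exact G.irrefl hadj
          rw [hu, hcol1v₀, hcol1ne v hvne]
          cases hcv : col v with
          | none => simp
          | some c' =>
              intro h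
              have : c' ∈ Fco G col v₀ := mem_Fco.mpr ⟨v, by rw [← hu]; exact hadj, hcv⟩
              rw [← Option.some_injective _ h] at this
              exact hc.2 this
        · rw [hcol1ne u hu]
          by_cases hv : v = v₀
          · rw [hv, hcol1v₀]
            rw [hcol1ne u hu] at hs
            obtain ⟨c', hc'⟩ := Option.isSome_iff_exists.mp hs
            rw [hc']
            intro h
            have : c' ∈ Fco G col v₀ := mem_Fco.mpr ⟨u, by rw [← hv]; exact hadj.symm, hc'⟩
            rw [Option.some_injective _ h] at this
            exact hc.2 this
          · rw [hcol1ne v hv]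
            rw [hcol1ne u hu] at hs
            exact hproper u v hadj hs
      have hlt1 : ∀ v c', col1 v = some c' → c' < d + 1 := by
        intro v c' h
        by_cases hv : v = v₀
        · rw [hv, hcol1v₀] at h
          have : c' = c := (Option.some_injective _ h).symm
          omega
        · rw [hcol1ne v hv] at h
          exact hlt v c' h
      obtain ⟨col', h1, h2, h3, h4⟩ := ih col1 hcount1 hproper1 hlt1
      refine ⟨col', h1, ?_, h3, h4⟩
      intro v hs
      have hvne : v ≠ v₀ := by
        intro h
        rw [h, hv₀] at hs
        simp at hs
      rw [h2 v (by rw [hcol1ne v hvne]; exact hs), hcol1ne v hvne]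

lemma exists_bcoloring (hreg : G.IsRegularOfDegree d) (hd : 4 ≤ d)
    (hcard : 2*d^3 + 2*d ≤ Fintype.card V + 2*d^2) :
    ∃ c : V → Fin (d+1), IsBColoring G (d+1) c := by
  have hN : 0 < Fintype.card V := by nlinarith [hcard, hd]
  have hne : Nonempty V := Fintype.card_pos_iff.mp hN
  have hinv : ∃ (f : ℕ → V) (col : V → Option ℕ), BInv G d f col (d+1) := by
    by_cases hpat : ∃ v u u' w : V,
        G.Adj v u ∧ G.Adj v u' ∧ u ≠ u' ∧ G.Adj u w ∧ G.Adj u' w ∧ w ≠ v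
    · obtain ⟨v₀, u, u', w, h1, h2, h3, h4, h5, h6⟩ := hpat
      have hball := ball2_small_of_pattern hreg (by omega) h1 h2 h3 h4 h5 h6
      obtain ⟨f, col, inv, _⟩ := build1 hreg hd hcard v₀ hball (d+1) le_rfl
      exact ⟨f, col, inv⟩
    · push_neg at hpat
      exact build2 hreg hd hcard hpat hne (d+1) le_rfl
  obtain ⟨f, col, inv⟩ := hinv
  obtain ⟨colT, hall, hext, hproper, hlt⟩ := extend_coloring hreg hd
    (univ.filter (fun v => col v = none)).card col rfl inv.proper inv.lt
  have hval : ∀ v, colT v = some ((colT v).get (hall v)) := fun v => (Option.some_get (hall v)).symm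
  have hvlt : ∀ v, (colT v).get (hall v) < d + 1 := fun v => hlt v _ (hval v)
  set cfin : V → Fin (d+1) := fun v => ⟨(colT v).get (hall v), hvlt v⟩ with hcfin
  have hcval : ∀ v (c : ℕ) (h : c < d + 1), colT v = some c → cfin v = ⟨c, h⟩ := by
    intro v c h hcv
    rw [hcfin]
    simp only []
    congr 1
    have := hval v
    exact Option.some_injective _ (this.symm.trans hcv)
  refine ⟨cfin, ?_, ?_⟩
  · intro u v hadj heq
    have h1 : colT u = colT v := by
      rw [hval u, hval v]
      congr 1
      have : ((colT u).get (hall u) : ℕ) = ((colT v).get (hall v) : ℕ) := congrArg Fin.val heq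
      exact this
    exact hproper u v hadj (hall u) h1
  · intro i
    have hiv : (i : ℕ) < d + 1 := i.isLt
    have hcent : col (f (i : ℕ)) = some (i : ℕ) := inv.center (i : ℕ) hiv
    have hcentT : colT (f (i : ℕ)) = some (i : ℕ) := by
      rw [hext (f (i : ℕ)) (by rw [hcent]; rfl)]
      exact hcent
    refine ⟨f (i : ℕ), ?_, ?_⟩
    · rw [hcval (f (i : ℕ)) (i : ℕ) hiv hcentT]
    · intro j hj
      have hjne : (j : ℕ) ≠ (i : ℕ) := fun h => hj (Fin.ext h)
      obtain ⟨u, hadj, hcu⟩ := inv.rainbow (i : ℕ) hiv (j : ℕ) j.isLt hjne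
      have hcuT : colT u = some (j : ℕ) := by
        rw [hext u (by rw [hcu]; rfl)]
        exact hcu
      refine ⟨u, hadj, ?_⟩
      rw [hcval u (j : ℕ) j.isLt hcuT]

lemma bcoloring_le (hreg : G.IsRegularOfDegree d) {k : ℕ} {c : V → Fin k}
    (hbc : IsBColoring G k c) : k ≤ d + 1 := by
  rcases Nat.eq_zero_or_pos k with h0 | hpos
  · omega
  obtain ⟨v, _, hdom⟩ := hbc.2 ⟨0, hpos⟩
  classical
  set i₀ : Fin k := ⟨0, hpos⟩
  set W : Fin k → V := fun j => if h : j = i₀ then v else Classical.choose (hdom j h) with hW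
  have hWspec : ∀ j : Fin k, j ≠ i₀ → G.Adj v (W j) ∧ c (W j) = j := by
    intro j hj
    rw [hW]
    simp only [dif_neg hj]
    exact Classical.choose_spec (hdom j hj)
  have hmaps : ∀ j ∈ (univ : Finset (Fin k)).erase i₀, W j ∈ G.neighborFinset v := by
    intro j hj
    rw [SimpleGraph.mem_neighborFinset]
    exact (hWspec j (Finset.mem_erase.mp hj).1).1
  have hinj : ∀ j ∈ (univ : Finset (Fin k)).erase i₀, ∀ j' ∈ (univ : Finset (Fin k)).erase i₀,
      W j = W j' → j = j' := by
    intro j hj j' hj' heq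
    have h1 := (hWspec j (Finset.mem_erase.mp hj).1).2
    have h2 := (hWspec j' (Finset.mem_erase.mp hj').1).2
    rw [← h1, ← h2, heq]
  have := Finset.card_le_card_of_injOn W hmaps hinj
  rw [Finset.card_erase_of_mem (Finset.mem_univ i₀), Finset.card_univ, Fintype.card_fin,
    NBcard hreg] at this
  omega

end Main


/-- Theorem 2.2: a `d`-regular graph (`d ≥ 4`) with at least `2d³ + 2d − 2d²` vertices
has b-chromatic number `d + 1`. -/
theorem bChromaticNumber_eq_of_card_ge
    {V : Type*} [Fintype V] (G : SimpleGraph V) [DecidableRel G.Adj]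
    (d : ℕ) (hd : 4 ≤ d) (hreg : G.IsRegularOfDegree d)
    (hcard : 2 * d ^ 3 + 2 * d - 2 * d ^ 2 ≤ Fintype.card V) :
    bChromaticNumber G = d + 1 := by
  letI := Classical.decEq V
  have hdd : d^2 ≤ d^3 := Nat.pow_le_pow_right (by omega) (by omega)
  have hcard' : 2*d^3 + 2*d ≤ Fintype.card V + 2*d^2 := by omega
  obtain ⟨c, hc⟩ := exists_bcoloring (G := G) hreg hd hcard'
  have hmem : (d+1) ∈ {k : ℕ | ∃ c : V → Fin k, IsBColoring G k c} := ⟨c, hc⟩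
  have hub : ∀ k ∈ {k : ℕ | ∃ c : V → Fin k, IsBColoring G k c}, k ≤ d + 1 := by
    rintro k ⟨c', hc'⟩
    exact bcoloring_le hreg hc'
  rw [bChromaticNumber]
  apply le_antisymm
  · exact csSup_le ⟨d+1, hmem⟩ hub
  · exact le_csSup ⟨d+1, hub⟩ hmem
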